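/- For integers L > s ≥ 1, the difference of Gaussian binomials G_{L,s} := [L choose s]_q - [L choose s-1]_q satisfies the recursion G_{L,s} = G_{L-1,s} + ∑_{k=1}^{s} q^{L-k} G_{L-k-1,s-k}, with boundary conditions G_{L,0} = 1 and G_{2s-1,s} = 0. -/

import Mathlib

open PowerSeries Finset

noncomputable def qPoch (n : ℕ) : PowerSeries ℚ :=
  ∏ k ∈ Finset.range n, (1 - (X : PowerSeries ℚ) ^ (k + 1))

noncomputable def gauss (L : ℕ) (s : ℤ) : PowerSeries ℚ :=
  if 0 ≤ s ∧ s ≤ (L : ℤ) then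
    qPoch L * (qPoch s.toNat)⁻¹ * (qPoch (L - s.toNat))⁻¹
  else 0

/-- The difference of Gaussian binomials `G_{L,s} = [L, s] - [L, s-1]`. -/
noncomputable def G (L : ℕ) (s : ℤ) : PowerSeries ℚ := gauss L s - gauss L (s - 1)

lemma qPoch_const (n : ℕ) : constantCoeff (qPoch n) = 1 := by
  simp [qPoch]

lemma qPoch_ne (n : ℕ) : qPoch n ≠ 0 := by
  intro h
  have := qPoch_const n
  rw [h] at this
  simp at this

lemma qPoch_mul_inv (n : ℕ) : qPoch n * (qPoch n)⁻¹ = 1 :=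
  PowerSeries.mul_inv_cancel _ (by rw [qPoch_const]; norm_num)

lemma qPoch_succ (n : ℕ) : qPoch (n + 1) = qPoch n * (1 - X ^ (n + 1)) := by
  rw [qPoch, Finset.prod_range_succ]; rfl

lemma gauss_nat (L m : ℕ) (h : m ≤ L) :
    gauss L m = qPoch L * (qPoch m)⁻¹ * (qPoch (L - m))⁻¹ := by
  simp [gauss, h]

lemma gauss_neg (L : ℕ) (s : ℤ) (h : s < 0) : gauss L s = 0 := by
  rw [gauss, if_neg]; omega

lemma gauss_zero (L : ℕ) : gauss L 0 = 1 := by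
  have h : gauss L (0 : ℤ) = gauss L ((0 : ℕ) : ℤ) := by norm_num
  rw [h, gauss_nat L 0 (by omega)]
  simp only [Nat.sub_zero, qPoch, Finset.range_zero, Finset.prod_empty, inv_one, mul_one]
  exact qPoch_mul_inv L

lemma gauss_mul (t m : ℕ) : gauss (m + t) m * (qPoch m * qPoch t) = qPoch (m + t) := by
  rw [gauss_nat (m + t) m (by omega)]
  have h : m + t - ((m : ℤ)).toNat = t := by simp
  simp only [Int.toNat_natCast, Nat.add_sub_cancel_left]
  calc qPoch (m + t) * (qPoch m)⁻¹ * (qPoch t)⁻¹ * (qPoch m * qPoch t)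
      = qPoch (m + t) * (qPoch m * (qPoch m)⁻¹) * (qPoch t * (qPoch t)⁻¹) := by ring
    _ = qPoch (m + t) := by rw [qPoch_mul_inv, qPoch_mul_inv, mul_one, mul_one]

lemma pascal (c t : ℕ) :
    gauss (c + 1 + t + 1) (c + 1) =
      gauss (c + 1 + t) (c + 1) + X ^ (t + 1) * gauss (c + 1 + t) c := by
  refine mul_right_cancel₀ (b := qPoch (c + 1) * qPoch (t + 1))
    (mul_ne_zero (qPoch_ne _) (qPoch_ne _)) ?_
  have h1 := gauss_mul t (c + 1)
  have h2 := gauss_mul (t + 1) c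
  have h3 := gauss_mul (t + 1) (c + 1)
  rw [show c + (t + 1) = c + 1 + t from by omega] at h2
  rw [show c + 1 + (t + 1) = c + 1 + t + 1 from by omega] at h3
  have h4 := qPoch_succ t
  have h5 := qPoch_succ c
  have h6 := qPoch_succ (c + 1 + t)
  push_cast at h1 h2 h3 ⊢
  linear_combination h3 - gauss (c + 1 + t) (c + 1) * qPoch (c + 1) * h4 -
    (1 - X ^ (t + 1)) * h1 - X ^ (t + 1) * gauss (c + 1 + t) c * qPoch (t + 1) * h5 -
    X ^ (t + 1) * (1 - X ^ (c + 1)) * h2 + h6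

lemma scale (m t : ℕ) :
    (1 - X ^ (m + t + 1)) * gauss (m + t) m = (1 - X ^ (t + 1)) * gauss (m + t + 1) m := by
  refine mul_right_cancel₀ (b := qPoch m * qPoch (t + 1))
    (mul_ne_zero (qPoch_ne _) (qPoch_ne _)) ?_
  have h1 := gauss_mul t m
  have h2 := gauss_mul (t + 1) m
  rw [show m + (t + 1) = m + t + 1 from by omega] at h2
  have h4 := qPoch_succ t
  have h6 := qPoch_succ (m + t)
  push_cast at h1 h2 ⊢
  linear_combination (1 - X ^ (m + t + 1)) * gauss (m + t) m * qPoch m * h4 +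
    (1 - X ^ (m + t + 1)) * (1 - X ^ (t + 1)) * h1 - (1 - X ^ (t + 1)) * h6 -
    (1 - X ^ (t + 1)) * h2

lemma pascal' (L : ℕ) (s : ℤ) (e : ℕ) (hL : 1 ≤ L) (hs : 0 ≤ s) (hsL : s ≤ (L : ℤ) - 1)
    (he : (e : ℤ) = (L : ℤ) - s) :
    gauss L s = gauss (L - 1) s + X ^ e * gauss (L - 1) (s - 1) := by
  lift s to ℕ using hs with m
  rcases Nat.eq_zero_or_pos m with rfl | hm
  · simp only [Nat.cast_zero, gauss_zero, zero_sub, gauss_neg _ (-1) (by omega), mul_zero,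
      add_zero]
  · obtain ⟨c, rfl⟩ : ∃ c, m = c + 1 := ⟨m - 1, by omega⟩
    obtain ⟨t, rfl⟩ : ∃ t, e = t + 1 := ⟨e - 1, by omega⟩
    obtain rfl : L = c + 1 + t + 1 := by omega
    have hp := pascal c t
    rw [show c + 1 + t + 1 - 1 = c + 1 + t from by omega]
    push_cast at hp ⊢
    rw [show ((c : ℤ) + 1 - 1) = (c : ℤ) from by ring]
    exact hp

lemma scale' (L : ℕ) (s : ℤ) (e : ℕ) (hL : 1 ≤ L) (hsL : s ≤ (L : ℤ) - 1)
    (he : (e : ℤ) = (L : ℤ) - s) :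
    (1 - X ^ L) * gauss (L - 1) s = (1 - X ^ e) * gauss L s := by
  rcases lt_or_ge s 0 with hs | hs
  · rw [gauss_neg _ _ hs, gauss_neg _ _ hs, mul_zero, mul_zero]
  · lift s to ℕ using hs with m
    obtain ⟨t, rfl⟩ : ∃ t, e = t + 1 := ⟨e - 1, by omega⟩
    obtain rfl : L = m + t + 1 := by omega
    have := scale m t
    rw [show m + t + 1 - 1 = m + t from by omega]
    exact this

lemma G_zero (n : ℕ) : G n 0 = 1 := by
  rw [G, gauss_zero, zero_sub, gauss_neg _ (-1) (by omega), sub_zero]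

lemma key (L s : ℕ) (h1 : 1 ≤ s) (h2 : s < L) :
    G L s = G (L - 1) s + G (L - 1) ((s : ℤ) - 1)
      - (1 - X ^ (L - 1)) * G (L - 2) ((s : ℤ) - 1) := by
  have hA : gauss L s = gauss (L - 1) s + X ^ (L - s) * gauss (L - 1) ((s : ℤ) - 1) :=
    pascal' L s (L - s) (by omega) (by omega) (by omega) (by omega)
  have hB : gauss L ((s : ℤ) - 1) =
      gauss (L - 1) ((s : ℤ) - 1) + X ^ (L - s + 1) * gauss (L - 1) ((s : ℤ) - 1 - 1) :=
    pascal' L ((s : ℤ) - 1) (L - s + 1) (by omega) (by omega) (by omega) (by omega)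
  have hC : (1 - X ^ (L - 1)) * gauss (L - 2) ((s : ℤ) - 1) =
      (1 - X ^ (L - s)) * gauss (L - 1) ((s : ℤ) - 1) := by
    have := scale' (L - 1) ((s : ℤ) - 1) (L - s) (by omega) (by omega) (by omega)
    rwa [show L - 1 - 1 = L - 2 from by omega] at this
  have hD : (1 - X ^ (L - 1)) * gauss (L - 2) ((s : ℤ) - 1 - 1) =
      (1 - X ^ (L - s + 1)) * gauss (L - 1) ((s : ℤ) - 1 - 1) := by
    rcases Nat.eq_or_lt_of_le h1 with rfl | hs2
    · rw [show ((1 : ℕ) : ℤ) - 1 - 1 = -1 from by norm_num, gauss_neg _ _ (by omega),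
        gauss_neg _ _ (by omega), mul_zero, mul_zero]
    · have := scale' (L - 1) ((s : ℤ) - 1 - 1) (L - s + 1) (by omega) (by omega) (by omega)
      rwa [show L - 1 - 1 = L - 2 from by omega] at this
  unfold G
  linear_combination hA - hB + hC - hD

lemma recursion (s : ℕ) : ∀ L : ℕ, 1 ≤ s → s < L →
    G L s = G (L - 1) s +
      ∑ k ∈ Finset.Icc 1 s, (X : PowerSeries ℚ) ^ (L - k) * G (L - k - 1) ((s : ℤ) - k) := by
  induction s with
  | zero => intro L h1 _; omega
  | succ n ih =>
    intro L _ h2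
    rcases Nat.eq_zero_or_pos n with rfl | hn
    · -- s = 1
      have hk := key L 1 le_rfl h2
      rw [show ((1 : ℕ) : ℤ) - 1 = 0 from by norm_num, G_zero, G_zero] at hk
      show G L ((1 : ℕ) : ℤ) = G (L - 1) ((1 : ℕ) : ℤ) + ∑ k ∈ Finset.Icc 1 1,
        (X : PowerSeries ℚ) ^ (L - k) * G (L - k - 1) (((1 : ℕ) : ℤ) - (k : ℤ))
      rw [Finset.Icc_self, Finset.sum_singleton]
      rw [show ((1 : ℕ) : ℤ) - ((1 : ℕ) : ℤ) = 0 from by norm_num,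
        show L - 1 - 1 = L - 2 from by omega, G_zero, mul_one, hk]
      ring
    · -- s = n + 1, n ≥ 1
      have hk := key L (n + 1) (by omega) h2
      have hih := ih (L - 1) hn (by omega)
      rw [show ((n + 1 : ℕ) : ℤ) - 1 = (n : ℤ) from by push_cast; ring] at hk
      rw [show L - 1 - 1 = L - 2 from by omega] at hih
      have hsum : ∑ k ∈ Finset.Icc 1 (n + 1),
            (X : PowerSeries ℚ) ^ (L - k) * G (L - k - 1) (((n + 1 : ℕ) : ℤ) - (k : ℤ))
          = (∑ k ∈ Finset.Icc 1 n,
              (X : PowerSeries ℚ) ^ (L - 1 - k) * G (L - 1 - k - 1) ((n : ℤ) - (k : ℤ)))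
            + X ^ (L - 1) * G (L - 2) (n : ℤ) := by
        rw [← Finset.Ico_add_one_right_eq_Icc 1 (n + 1), ← Finset.Ico_add_one_right_eq_Icc 1 n,
          Finset.sum_Ico_eq_sum_range, Finset.sum_Ico_eq_sum_range]
        simp only [Nat.add_sub_cancel]
        rw [Finset.sum_range_succ']
        congr 1
        · refine Finset.sum_congr rfl fun j hj => ?_
          rw [show L - (1 + (j + 1)) = L - 1 - (1 + j) from by omega,
            show L - 1 - (1 + j) - 1 = L - 1 - (1 + j) - 1 from rfl,
            show ((n + 1 : ℕ) : ℤ) - ((1 + (j + 1) : ℕ) : ℤ) = (n : ℤ) - ((1 + j : ℕ) : ℤ)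
              from by push_cast; ring]
        · rw [show L - (1 + 0) = L - 1 from by omega,
            show L - 1 - 1 = L - 2 from by omega,
            show ((n + 1 : ℕ) : ℤ) - ((1 + 0 : ℕ) : ℤ) = (n : ℤ) from by push_cast; ring]
      rw [hk, hih, hsum]
      ring

/-- For `L > s ≥ 1`, `G_{L,s} = [L, s] - [L, s-1]` satisfies the recursion
`G_{L,s} = G_{L-1,s} + ∑_{k=1}^{s} q^{L-k} G_{L-k-1,s-k}`, with boundary
conditions `G_{L,0} = 1` and `G_{2s-1,s} = 0`. -/
theorem stmt5 (L s : ℕ) (h1 : 1 ≤ s) (h2 : s < L) :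
    (G L s = G (L - 1) s +
        ∑ k ∈ Finset.Icc 1 s,
          (X : PowerSeries ℚ) ^ (L - k) * G (L - k - 1) ((s : ℤ) - k)) ∧
      G L 0 = 1 ∧ G (2 * s - 1) s = 0 := by
  refine ⟨recursion s L h1 h2, G_zero L, ?_⟩
  rw [G, show ((s : ℤ) - 1) = (((s - 1 : ℕ) : ℤ)) from by omega,
    gauss_nat (2 * s - 1) s (by omega), gauss_nat (2 * s - 1) (s - 1) (by omega),
    show 2 * s - 1 - s = s - 1 from by omega, show 2 * s - 1 - (s - 1) = s from by omega]
  ring
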